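/- A prefix of an efficient temporal path need not be efficient: there exists a weighted temporal graph with an (s,z)-path P* that is efficient with respect to both (arrival time, cost) and (duration, cost), whose prefix P¹ from s to the intermediate vertex w is not efficient with respect to (arrival time, cost) among (s,w)-paths. -/

import Mathlib

/-- A weighted temporal edge: source, destination, availability time,
traversal time, and real cost. -/
structure TEdge (V : Type) where
  src : V
  dst : V
  time : ℕ
  lam : ℕ
  cost : ℝ

variable {V : Type}

/-- Temporal compatibility of consecutive edges. -/
def TEdge.Compat (e f : TEdge V) : Prop := e.dst = f.src ∧ e.time + e.lam ≤ f.time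

/-- A temporal (s,z)-walk in the edge set `E`. -/
def IsWalk (E : Set (TEdge V)) (s z : V) (P : List (TEdge V)) : Prop :=
  P ≠ [] ∧ (∀ e ∈ P, e ∈ E) ∧ P.Chain' TEdge.Compat ∧
  (∀ e, P.head? = some e → e.src = s) ∧ (∀ e, P.getLast? = some e → e.dst = z)

/-- The sequence of vertices visited by a walk. -/
def visitedVerts (P : List (TEdge V)) : List V :=
  (P.head?.elim [] fun e => [e.src]) ++ P.map TEdge.dst

/-- A temporal path: a simple temporal walk. -/
def IsPath (E : Set (TEdge V)) (s z : V) (P : List (TEdge V)) : Prop :=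
  IsWalk E s z P ∧ (visitedVerts P).Nodup

/-- Cost of a walk. -/
noncomputable def wcost (P : List (TEdge V)) : ℝ := (P.map TEdge.cost).sum

/-- Arrival time of a walk. -/
def warr (P : List (TEdge V)) : ℕ := P.getLast?.elim 0 fun e => e.time + e.lam

/-- Starting time of a walk. -/
def wstart (P : List (TEdge V)) : ℕ := P.head?.elim 0 fun e => e.time

/-- Duration of a walk. -/
def wdur (P : List (TEdge V)) : ℕ := warr P - wstart P

/-- `Q` dominates `P` w.r.t. cost and the temporal objective `f`. -/
def Dominates (f : List (TEdge V) → ℕ) (Q P : List (TEdge V)) : Prop :=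
  (wcost Q < wcost P ∧ f Q ≤ f P) ∨ (wcost Q ≤ wcost P ∧ f Q < f P)

/-- `P` is efficient within the set `X` w.r.t. cost and objective `f`. -/
def EfficientIn (X : Set (List (TEdge V))) (f : List (TEdge V) → ℕ) (P : List (TEdge V)) : Prop :=
  P ∈ X ∧ ∀ Q ∈ X, ¬ Dominates f Q P

def esu : TEdge ℕ := ⟨0,1,1,1,1⟩
def euw : TEdge ℕ := ⟨1,3,2,1,1⟩
def esw : TEdge ℕ := ⟨0,3,2,3,2⟩
def esv : TEdge ℕ := ⟨0,2,5,1,1⟩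
def evw : TEdge ℕ := ⟨2,3,6,1,1⟩
def ewz : TEdge ℕ := ⟨3,4,5,1,1⟩

def EE : Set (TEdge ℕ) := {esu, euw, esw, esv, evw, ewz}

lemma memE {e : TEdge ℕ} (h : e ∈ EE) :
    e = esu ∨ e = euw ∨ e = esw ∨ e = esv ∨ e = evw ∨ e = ewz := by
  simpa [EE] using h

lemma path_star : IsPath EE 0 4 [esw, ewz] := by
  refine ⟨⟨by simp, ?_, ?_, ?_, ?_⟩, ?_⟩
  · intro e he; simp at he; rcases he with rfl | rfl <;> simp [EE]
  · simp [List.Chain', List.isChain_cons_cons, TEdge.Compat, esw, ewz]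
  · intro e he; simp at he; subst he; simp [esw]
  · intro e he; simp [List.getLast?] at he; subst he; simp [ewz]
  · simp [visitedVerts, esw, ewz]

lemma path_alt : IsPath EE 0 4 [esu, euw, ewz] := by
  refine ⟨⟨by simp, ?_, ?_, ?_, ?_⟩, ?_⟩
  · intro e he; simp at he; rcases he with rfl | rfl | rfl <;> simp [EE]
  · simp [List.Chain', List.isChain_cons_cons, TEdge.Compat, esu, euw, ewz]
  · intro e he; simp at he; subst he; simp [esu]
  · intro e he; simp [List.getLast?] at he; subst he; simp [ewz]
  · simp [visitedVerts, esu, euw, ewz]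

lemma path_P1 : IsPath EE 0 3 [esw] := by
  refine ⟨⟨by simp, ?_, ?_, ?_, ?_⟩, ?_⟩
  · intro e he; simp at he; subst he; simp [EE]
  · simp [List.Chain']
  · intro e he; simp at he; subst he; simp [esw]
  · intro e he; simp [List.getLast?] at he; subst he; simp [esw]
  · simp [visitedVerts, esw]

lemma path_P2 : IsPath EE 0 3 [esu, euw] := by
  refine ⟨⟨by simp, ?_, ?_, ?_, ?_⟩, ?_⟩
  · intro e he; simp at he; rcases he with rfl | rfl <;> simp [EE]
  · simp [List.Chain', List.isChain_cons_cons, TEdge.Compat, esu, euw]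
  · intro e he; simp at he; subst he; simp [esu]
  · intro e he; simp [List.getLast?] at he; subst he; simp [euw]
  · simp [visitedVerts, esu, euw]

set_option maxHeartbeats 2000000 in
lemma classify {Q : List (TEdge ℕ)} (h : IsPath EE 0 4 Q) :
    Q = [esw, ewz] ∨ Q = [esu, euw, ewz] := by
  obtain ⟨⟨hne, hE, hchain, hhead, hlast⟩, _⟩ := h
  match Q with
  | [] => exact absurd rfl hne
  | [a] =>
    have h1 := hhead a rfl
    have h2 := hlast a (by simp [List.getLast?])
    rcases memE (hE a (by simp)) with rfl|rfl|rfl|rfl|rfl|rfl <;>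
      simp [esu, euw, esw, esv, evw, ewz] at h1 h2
  | [a, b] =>
    have h1 := hhead a rfl
    have h2 := hlast b (by simp [List.getLast?])
    simp [List.Chain', List.isChain_cons_cons, TEdge.Compat] at hchain
    rcases memE (hE a (by simp)) with rfl|rfl|rfl|rfl|rfl|rfl <;>
      rcases memE (hE b (by simp)) with rfl|rfl|rfl|rfl|rfl|rfl <;>
      simp_all [esu, euw, esw, esv, evw, ewz]
  | [a, b, c] =>
    have h1 := hhead a rfl
    have h2 := hlast c (by simp [List.getLast?])
    simp [List.Chain', List.isChain_cons_cons, TEdge.Compat] at hchain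
    rcases memE (hE a (by simp)) with rfl|rfl|rfl|rfl|rfl|rfl <;>
      rcases memE (hE b (by simp)) with rfl|rfl|rfl|rfl|rfl|rfl <;>
      rcases memE (hE c (by simp)) with rfl|rfl|rfl|rfl|rfl|rfl <;>
      simp_all [esu, euw, esw, esv, evw, ewz]
  | a :: b :: c :: d :: T =>
    have h1 := hhead a rfl
    simp [List.Chain', List.isChain_cons_cons] at hchain
    obtain ⟨hab, hbc, hcd, -⟩ := hchain
    rcases memE (hE a (by simp)) with rfl|rfl|rfl|rfl|rfl|rfl <;>
      rcases memE (hE b (by simp)) with rfl|rfl|rfl|rfl|rfl|rfl <;>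
      rcases memE (hE c (by simp)) with rfl|rfl|rfl|rfl|rfl|rfl <;>
      rcases memE (hE d (by simp)) with rfl|rfl|rfl|rfl|rfl|rfl <;>
      simp_all [TEdge.Compat, esu, euw, esw, esv, evw, ewz]

theorem stmt11 : ∃ (E : Set (TEdge ℕ)) (s w z : ℕ)
    (Pstar P1 R : List (TEdge ℕ)),
    IsPath E s z Pstar ∧
    EfficientIn {Q | IsPath E s z Q} warr Pstar ∧
    EfficientIn {Q | IsPath E s z Q} wdur Pstar ∧
    Pstar = P1 ++ R ∧ IsPath E s w P1 ∧
    ¬ EfficientIn {Q | IsPath E s w Q} warr P1 := by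
  refine ⟨EE, 0, 3, 4, [esw, ewz], [esw], [ewz], path_star, ?_, ?_, rfl, path_P1, ?_⟩
  · refine ⟨path_star, ?_⟩
    intro Q hQ hdom
    rcases classify hQ with rfl | rfl <;>
      simp [Dominates, wcost, warr, List.getLast?, esu, euw, esw, ewz] at hdom
    norm_num at hdom
  · refine ⟨path_star, ?_⟩
    intro Q hQ hdom
    rcases classify hQ with rfl | rfl <;>
      simp [Dominates, wcost, wdur, warr, wstart, List.getLast?, esu, euw, esw, ewz] at hdom
  · rintro ⟨-, h⟩
    exact h [esu, euw] path_P2 (Or.inr ⟨by norm_num [wcost, esu, euw, esw],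
      by norm_num [warr, List.getLast?, esu, euw, esw]⟩)
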